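/- arXiv:2108.06443 — 3 statements merged into one kernel-verified Lean document; each statement's English description precedes it below -/
import Mathlib

section
/- Let A = PᵀΛP be symmetric positive definite with P orthogonal, S = Λ^{-1/2}P, and x̂ = Sx. If (v, σ) solves the anisotropic first-order acoustic system A^{1/2}∇v + ∂σ/∂t = 0, ∇·(A^{1/2}σ) + c^{-2} ∂v/∂t = 0, then (v̂, σ̂) defined by v̂(x̂,t) = v(S⁻¹x̂, t), σ̂(x̂,t) = P σ(S⁻¹x̂, t) solves the isotropic system ∇̂v̂ + ∂σ̂/∂t = 0, ∇̂·σ̂ + c^{-2} ∂v̂/∂t = 0. -/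
open Matrix

/-- Gradient (in the space variable) of a scalar field on `Fin d → ℝ`. -/
noncomputable def grad {d : ℕ} (v : (Fin d → ℝ) → ℝ) (x : Fin d → ℝ) : Fin d → ℝ :=
  fun i => fderiv ℝ v x (Pi.single i 1)

/-- Divergence (in the space variable) of a vector field on `Fin d → ℝ`. -/
noncomputable def divg {d : ℕ} (σ : (Fin d → ℝ) → (Fin d → ℝ)) (x : Fin d → ℝ) : ℝ :=
  ∑ i, fderiv ℝ σ x (Pi.single i 1) i

/-- The matrix `Λ^{1/2}` for `Λ = diag lam`. -/
noncomputable def sqrtDiag {d : ℕ} (lam : Fin d → ℝ) : Matrix (Fin d) (Fin d) ℝ :=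
  Matrix.diagonal fun i => Real.sqrt (lam i)

/-- The coordinate transformation matrix `S = Λ^{-1/2} P`. -/
noncomputable def Smat {d : ℕ} (P : Matrix (Fin d) (Fin d) ℝ) (lam : Fin d → ℝ) :
    Matrix (Fin d) (Fin d) ℝ :=
  (Matrix.diagonal fun i => (Real.sqrt (lam i))⁻¹) * P

/-- The inverse transformation matrix `S⁻¹ = Pᵀ Λ^{1/2}`. -/
noncomputable def Sinv {d : ℕ} (P : Matrix (Fin d) (Fin d) ℝ) (lam : Fin d → ℝ) :
    Matrix (Fin d) (Fin d) ℝ :=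
  Pᵀ * sqrtDiag lam

noncomputable def toCLM {d : ℕ} (M : Matrix (Fin d) (Fin d) ℝ) :
    (Fin d → ℝ) →L[ℝ] (Fin d → ℝ) :=
  LinearMap.toContinuousLinearMap M.mulVecLin

@[simp] lemma toCLM_apply {d : ℕ} (M : Matrix (Fin d) (Fin d) ℝ) (u : Fin d → ℝ) :
    toCLM M u = M.mulVec u := rfl

lemma clm_sum {d : ℕ} {E : Type*} [NormedAddCommGroup E] [NormedSpace ℝ E]
    (φ : (Fin d → ℝ) →L[ℝ] E) (u : Fin d → ℝ) :
    φ u = ∑ j, u j • φ (Pi.single j 1) := by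
  conv_lhs => rw [← Finset.univ_sum_single u]
  rw [map_sum]
  refine Finset.sum_congr rfl fun j _ => ?_
  rw [← _root_.map_smul]
  congr 1
  ext k
  by_cases h : k = j <;> simp [Pi.single_apply, h]

lemma fderiv_mat_comp {d : ℕ} {E : Type*} [NormedAddCommGroup E] [NormedSpace ℝ E]
    (M : Matrix (Fin d) (Fin d) ℝ) (f : (Fin d → ℝ) → E) (y : Fin d → ℝ)
    (hf : DifferentiableAt ℝ f (M.mulVec y)) :
    fderiv ℝ (fun z => f (M.mulVec z)) y = (fderiv ℝ f (M.mulVec y)).comp (toCLM M) := by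
  have h : (fun z => f (M.mulVec z)) = f ∘ ⇑(toCLM M) := rfl
  rw [h]
  have := fderiv_comp (𝕜 := ℝ) (g := f) (f := ⇑(toCLM M)) y hf (toCLM M).differentiableAt
  rw [this, (toCLM M).fderiv]; rfl

lemma fderiv_clm_post {d : ℕ} (N : Matrix (Fin d) (Fin d) ℝ)
    (g : (Fin d → ℝ) → (Fin d → ℝ)) (x : Fin d → ℝ) (hg : DifferentiableAt ℝ g x) :
    fderiv ℝ (fun z => N.mulVec (g z)) x = (toCLM N).comp (fderiv ℝ g x) := by
  have h : (fun z => N.mulVec (g z)) = ⇑(toCLM N) ∘ g := rfl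
  rw [h]
  have := fderiv_comp (𝕜 := ℝ) (g := ⇑(toCLM N)) (f := g) x (toCLM N).differentiableAt hg
  rw [this, (toCLM N).fderiv]

lemma grad_comp {d : ℕ} (M : Matrix (Fin d) (Fin d) ℝ) (f : (Fin d → ℝ) → ℝ) (y : Fin d → ℝ)
    (hf : DifferentiableAt ℝ f (M.mulVec y)) :
    grad (fun z => f (M.mulVec z)) y = Mᵀ.mulVec (grad f (M.mulVec y)) := by
  funext i
  have h := fderiv_mat_comp M f y hf
  simp only [grad]
  rw [h]
  simp only [ContinuousLinearMap.comp_apply, toCLM_apply]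
  rw [clm_sum (fderiv ℝ f (M.mulVec y))]
  simp [Matrix.mulVec, dotProduct, Matrix.mulVec_single, Matrix.transpose_apply, grad,
    smul_eq_mul, Pi.single_apply, mul_ite, mul_one, mul_zero]

lemma deriv_mat_comp {d : ℕ} (N : Matrix (Fin d) (Fin d) ℝ) (f : ℝ → Fin d → ℝ) (t : ℝ)
    (hf : DifferentiableAt ℝ f t) :
    deriv (fun s => N.mulVec (f s)) t = N.mulVec (deriv f t) := by
  have h := ((toCLM N).hasFDerivAt.comp_hasDerivAt t hf.hasDerivAt)
  exact h.deriv

lemma divg_comp {d : ℕ} (M N : Matrix (Fin d) (Fin d) ℝ) (g : (Fin d → ℝ) → (Fin d → ℝ))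
    (y : Fin d → ℝ) (hg : DifferentiableAt ℝ g (M.mulVec y)) :
    divg (fun z => N.mulVec (g (M.mulVec z))) y
      = divg (fun z => (M * N).mulVec (g z)) (M.mulVec y) := by
  set x := M.mulVec y with hx
  set D := fderiv ℝ g x with hD
  have hgm : DifferentiableAt ℝ (fun w => g (M.mulVec w)) y :=
    DifferentiableAt.comp y hg (toCLM M).differentiableAt
  have h1 : fderiv ℝ (fun z => N.mulVec (g (M.mulVec z))) y
      = (toCLM N).comp (fderiv ℝ (fun w => g (M.mulVec w)) y) := fderiv_clm_post N _ y hgm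
  have h2 : fderiv ℝ (fun w => g (M.mulVec w)) y = D.comp (toCLM M) :=
    fderiv_mat_comp M g y hg
  have h3 : fderiv ℝ (fun z => (M * N).mulVec (g z)) x = (toCLM (M * N)).comp D :=
    fderiv_clm_post _ g x hg
  simp only [divg, h1, h2, h3, ContinuousLinearMap.comp_apply, toCLM_apply]
  have hDu : ∀ i, D (M.mulVec (Pi.single i 1)) = ∑ k, M k i • D (Pi.single k 1) := by
    intro i
    rw [clm_sum D]
    refine Finset.sum_congr rfl fun k _ => ?_
    rw [Matrix.mulVec_single]
    simp
  have step1 : ∀ i, (N.mulVec (D (M.mulVec (Pi.single i 1)))) i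
      = ∑ k, M k i * (N.mulVec (D (Pi.single k 1))) i := by
    intro i
    rw [hDu i, ← toCLM_apply, map_sum]
    simp [Finset.sum_apply]
  rw [Finset.sum_congr rfl (fun i _ => step1 i), Finset.sum_comm]
  refine Finset.sum_congr rfl fun k _ => ?_
  rw [← Matrix.mulVec_mulVec]
  simp [Matrix.mulVec, dotProduct]

theorem stmt3 {d : ℕ} (A P : Matrix (Fin d) (Fin d) ℝ) (lam : Fin d → ℝ)
    (hpos : ∀ i, 0 < lam i) (hP : Pᵀ * P = 1)
    (hA : A = Pᵀ * Matrix.diagonal lam * P)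
    (c : ℝ) (hc : 0 < c)
    (v : (Fin d → ℝ) → ℝ → ℝ) (σ : (Fin d → ℝ) → ℝ → (Fin d → ℝ))
    (hv : ContDiff ℝ 1 fun p : (Fin d → ℝ) × ℝ => v p.1 p.2)
    (hσ : ContDiff ℝ 1 fun p : (Fin d → ℝ) × ℝ => σ p.1 p.2)
    (heq1 : ∀ (x : Fin d → ℝ) (t : ℝ),
      (Pᵀ * sqrtDiag lam * P).mulVec (grad (fun y => v y t) x) + deriv (σ x) t = 0)
    (heq2 : ∀ (x : Fin d → ℝ) (t : ℝ),
      divg (fun y => (Pᵀ * sqrtDiag lam * P).mulVec (σ y t)) x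
        + (c ^ 2)⁻¹ * deriv (fun s => v x s) t = 0) :
    (∀ (y : Fin d → ℝ) (t : ℝ),
      grad (fun z => v ((Sinv P lam).mulVec z) t) y
        + deriv (fun s => P.mulVec (σ ((Sinv P lam).mulVec y) s)) t = 0) ∧
    (∀ (y : Fin d → ℝ) (t : ℝ),
      divg (fun z => P.mulVec (σ ((Sinv P lam).mulVec z) t)) y
        + (c ^ 2)⁻¹ * deriv (fun s => v ((Sinv P lam).mulVec y) s) t = 0) := by
  have hvd : Differentiable ℝ (fun p : (Fin d → ℝ) × ℝ => v p.1 p.2) :=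
    hv.differentiable one_ne_zero
  have hσd : Differentiable ℝ (fun p : (Fin d → ℝ) × ℝ => σ p.1 p.2) :=
    hσ.differentiable one_ne_zero
  have hv1 : ∀ t, Differentiable ℝ (fun y => v y t) := fun t =>
    hvd.comp (differentiable_id.prodMk (differentiable_const t))
  have hσ1 : ∀ t, Differentiable ℝ (fun y => σ y t) := fun t =>
    hσd.comp (differentiable_id.prodMk (differentiable_const t))
  have hσt : ∀ x, Differentiable ℝ (σ x) := fun x =>
    hσd.comp ((differentiable_const x).prodMk differentiable_id)
  have hPPt : P * Pᵀ = 1 := mul_eq_one_comm.mp hP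
  have hMT : (Sinv P lam)ᵀ = sqrtDiag lam * P := by
    rw [Sinv, Matrix.transpose_mul, Matrix.transpose_transpose]
    simp [sqrtDiag, Matrix.diagonal_transpose]
  have hPB : P * (Pᵀ * sqrtDiag lam * P) = sqrtDiag lam * P := by
    rw [Matrix.mul_assoc Pᵀ, ← Matrix.mul_assoc, hPPt, Matrix.one_mul]
  constructor
  · intro y t
    set x := (Sinv P lam).mulVec y with hx
    have hgrad := grad_comp (Sinv P lam) (fun z => v z t) y ((hv1 t).differentiableAt)
    have hder := deriv_mat_comp P (σ x) t ((hσt x).differentiableAt)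
    rw [hgrad, hder, hMT]
    have h1 : deriv (σ x) t = -((Pᵀ * sqrtDiag lam * P).mulVec (grad (fun y => v y t) x)) :=
      eq_neg_of_add_eq_zero_right (heq1 x t)
    rw [h1, Matrix.mulVec_neg, Matrix.mulVec_mulVec, hPB, add_neg_cancel]
  · intro y t
    set x := (Sinv P lam).mulVec y with hx
    have hdiv := divg_comp (Sinv P lam) P (fun z => σ z t) y ((hσ1 t).differentiableAt)
    rw [hdiv, show Sinv P lam * P = Pᵀ * sqrtDiag lam * P from rfl]
    exact heq2 x t
end

section
/- The space of polynomials of total degree ≤ p in the d+1 variables (t, x₁,…,x_d) that satisfy the wave equation −ΔU + c^{-2}∂²U/∂t² = 0 has dimension C(p+d, d) + C(p−1+d, d), where C(n,k) denotes the binomial coefficient. -/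
open MvPolynomial

/-- The wave operator `U ↦ c⁻²∂²U/∂t² − ΔU` on polynomials in the variables
`Option (Fin d)`, where `none` plays the role of the time variable `t` and
`some m` the space variable `x_m`. -/
noncomputable def waveOp {d : ℕ} (c : ℝ) :
    MvPolynomial (Option (Fin d)) ℝ →ₗ[ℝ] MvPolynomial (Option (Fin d)) ℝ :=
  (c ^ 2)⁻¹ • ((pderiv (none : Option (Fin d))).toLinearMap ∘ₗ
      (pderiv (none : Option (Fin d))).toLinearMap)
    - ∑ m : Fin d, (pderiv (some m)).toLinearMap ∘ₗ (pderiv (some m)).toLinearMap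





section Aux
open Finsupp

variable {σ : Type*} [Fintype σ] [DecidableEq σ]

/-- sum of values of a ℕ-finsupp -/
private def sv (f : σ →₀ ℕ) : ℕ := f.sum fun _ e => e

lemma sv_fintype (f : σ →₀ ℕ) : sv f = ∑ i : σ, f i :=
  Finsupp.sum_fintype _ _ (fun _ => rfl)

lemma sv_option (g : Option σ →₀ ℕ) :
    (g.sum fun _ e => e) = g none + ∑ m : σ, g (some m) := by
  rw [Finsupp.sum_fintype _ _ (fun _ => rfl), Fintype.sum_option]

noncomputable def E1 (N : ℕ) :
    {f : σ →₀ ℕ | (f.sum fun _ e => e) ≤ N} ≃ {g : Option σ →₀ ℕ | (g.sum fun _ e => e) = N} where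
  toFun := fun ⟨f, hf⟩ => ⟨Finsupp.embDomain ⟨some, Option.some_injective σ⟩ f
      + Finsupp.single none (N - (f.sum fun _ e => e)), by
    have h1 : ((Finsupp.embDomain ⟨some, Option.some_injective σ⟩ f
        + Finsupp.single none (N - (f.sum fun _ e => e))).sum fun _ e => e)
        = (f.sum fun _ e => e) + (N - (f.sum fun _ e => e)) := by
      rw [Finsupp.sum_add_index' (fun _ => rfl) (fun _ _ _ => rfl),
        Finsupp.sum_embDomain, Finsupp.sum_single_index rfl]
    simp only [Set.mem_setOf_eq] at hf ⊢
    rw [h1]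
    omega⟩
  invFun := fun ⟨g, hg⟩ => ⟨g.some, by
    have := sv_option g
    have h2 : (g.some.sum fun _ e => e) = ∑ m : σ, g (some m) := by
      rw [Finsupp.sum_fintype _ _ (fun _ => rfl)]
      simp [Finsupp.some_apply]
    simp only [Set.mem_setOf_eq] at hg ⊢
    omega⟩
  left_inv := by
    rintro ⟨f, hf⟩
    ext a
    simp only [Finsupp.some_apply, Finsupp.add_apply, Finsupp.single_apply]
    rw [show (Option.some a) = (⟨some, Option.some_injective σ⟩ : σ ↪ Option σ) a from rfl,
      Finsupp.embDomain_apply]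
    simp
  right_inv := by
    rintro ⟨g, hg⟩
    simp only [Set.mem_setOf_eq] at hg
    ext i
    cases i with
    | none =>
      have hrange : (none : Option σ) ∉ Set.range (⟨some, Option.some_injective σ⟩ :
          σ ↪ Option σ) := by simp
      have := sv_option g
      have h2 : (g.some.sum fun _ e => e) = ∑ m : σ, g (some m) := by
        rw [Finsupp.sum_fintype _ _ (fun _ => rfl)]
        simp [Finsupp.some_apply]
      simp only [Finsupp.add_apply, Finsupp.embDomain_notin_range _ _ _ hrange,
        Finsupp.single_eq_same, zero_add]
      omega
    | some a =>
      simp only [Finsupp.add_apply, Finsupp.single_apply, Finsupp.some_apply]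
      rw [show (Option.some a) = (⟨some, Option.some_injective σ⟩ : σ ↪ Option σ) a from rfl,
        Finsupp.embDomain_apply]
      simp [Finsupp.some_apply]

noncomputable def E2 (N : ℕ) :
    {g : Option σ →₀ ℕ | (g.sum fun _ e => e) = N} ≃ Sym (Option σ) N where
  toFun := fun ⟨g, hg⟩ => ⟨Finsupp.toMultiset g, by
    rw [Finsupp.card_toMultiset]
    simpa [Function.id_def] using hg⟩
  invFun := fun s => ⟨Multiset.toFinsupp s.val, by
    simp only [Set.mem_setOf_eq]
    have := s.prop
    rw [show ((Multiset.toFinsupp s.val).sum fun _ e => e)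
        = (Multiset.toFinsupp s.val).sum (fun _ => id) from rfl,
      ← Finsupp.card_toMultiset, Multiset.toFinsupp_toMultiset]
    exact s.prop⟩
  left_inv := by rintro ⟨g, hg⟩; simp [Finsupp.toMultiset_toFinsupp]
  right_inv := by rintro ⟨m, hm⟩; simp [Multiset.toFinsupp_toMultiset]; rfl

lemma card_sv_le (N : ℕ) :
    Nat.card {f : σ →₀ ℕ | (f.sum fun _ e => e) ≤ N} = (N + Fintype.card σ).choose (Fintype.card σ) := by
  haveI : Fintype (Sym (Option σ) N) := inferInstance
  haveI : Fintype {f : σ →₀ ℕ | (f.sum fun _ e => e) ≤ N} := Fintype.ofEquiv _ ((E1 N).trans (E2 N)).symm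
  rw [Nat.card_eq_fintype_card, Fintype.card_congr ((E1 N).trans (E2 N)),
    Sym.card_sym_eq_choose]
  rw [Fintype.card_option]
  have h1 : Fintype.card σ + 1 + N - 1 = N + Fintype.card σ := by omega
  have h2 := Nat.choose_symm (n := N + Fintype.card σ) (k := Fintype.card σ) (by omega)
  rw [Nat.add_sub_cancel] at h2
  rw [h1, h2]

lemma finrank_rtd (N : ℕ) :
    Module.finrank ℝ (restrictTotalDegree σ ℝ N) = (N + Fintype.card σ).choose (Fintype.card σ) := by
  haveI : Fintype {f : σ →₀ ℕ | (f.sum fun _ e => e) ≤ N} :=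
    Fintype.ofEquiv _ ((E1 N).trans (E2 N)).symm
  rw [restrictTotalDegree]
  rw [Module.finrank_eq_card_basis (basisRestrictSupport ℝ _), ← Nat.card_eq_fintype_card,
    card_sv_le]

variable {d : ℕ}

local notation "σ'" => Option (Fin d)

/-- t-antiderivative on polynomials -/
noncomputable def Jop (d : ℕ) : MvPolynomial σ' ℝ →ₗ[ℝ] MvPolynomial σ' ℝ :=
  (basisMonomials σ' ℝ).constr ℝ fun n =>
    ((n none : ℝ) + 1)⁻¹ • monomial (n + Finsupp.single none 1) (1 : ℝ)

lemma Jop_monomial (n : σ' →₀ ℕ) (a : ℝ) :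
    Jop d (monomial n a) = ((n none : ℝ) + 1)⁻¹ • monomial (n + Finsupp.single none 1) a := by
  have h1 : monomial n a = a • monomial n (1:ℝ) := by
    rw [smul_monomial, smul_eq_mul, mul_one]
  have h2 : (basisMonomials σ' ℝ) n = monomial n (1:ℝ) := by
    rw [coe_basisMonomials]
  rw [h1, map_smul, ← h2]
  unfold Jop
  rw [Module.Basis.constr_basis, smul_comm, smul_monomial, smul_eq_mul, mul_one]

lemma sumid (n : σ' →₀ ℕ) : (n.sum fun _ => (id : ℕ → ℕ)) = ∑ j, n j :=
  Finsupp.sum_fintype _ _ (fun _ => rfl)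

lemma sumval (n : σ' →₀ ℕ) : (n.sum fun _ e => e) = ∑ j, n j :=
  Finsupp.sum_fintype _ _ (fun _ => rfl)

lemma deg_add_single (n : σ' →₀ ℕ) :
    ∑ j : σ', ((n + Finsupp.single (none : σ') 1 : σ' →₀ ℕ)) j = (∑ j, n j) + 1 := by
  simp only [Finsupp.add_apply, Finset.sum_add_distrib]
  congr 1
  simp [Finsupp.single_apply]

lemma deg_sub_single (n : σ' →₀ ℕ) (i : σ') (h : 1 ≤ n i) :
    ∑ j : σ', ((n - Finsupp.single i 1 : σ' →₀ ℕ)) j = (∑ j, n j) - 1 := by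
  simp only [Finsupp.tsub_apply]
  rw [Finset.sum_tsub_distrib]
  · congr 1
    simp [Finsupp.single_apply]
  · intro j _
    rcases eq_or_ne j i with rfl | hj
    · simpa [Finsupp.single_apply] using h
    · simp [Finsupp.single_apply, Ne.symm hj]

lemma single_le_deg (n : σ' →₀ ℕ) (i : σ') : n i ≤ ∑ j, n j :=
  Finset.single_le_sum (fun j _ => Nat.zero_le _) (Finset.mem_univ i)

lemma deg_le_of_mem_support {f : MvPolynomial σ' ℝ} {D : ℕ} (hf : f.totalDegree ≤ D)
    {n : σ' →₀ ℕ} (hn : n ∈ f.support) : ∑ j, n j ≤ D := by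
  rw [← sumval]; exact le_trans (le_totalDegree hn) hf

lemma pderiv_none_Jop (f : MvPolynomial σ' ℝ) : pderiv none (Jop d f) = f := by
  induction f using MvPolynomial.induction_on' with
  | add p q hp hq => rw [map_add, map_add, hp, hq]
  | monomial n a =>
    rw [Jop_monomial, Derivation.map_smul, pderiv_monomial]
    have h1 : n + Finsupp.single none 1 - Finsupp.single none 1 = n := by
      ext i; simp
    rw [h1]
    have h2 : (((n + Finsupp.single (none : σ') 1 : σ' →₀ ℕ)) none : ℝ) = (n none : ℝ) + 1 := by
      simp
    rw [h2, ← map_smul, smul_eq_mul]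
    congr 1
    have : (n none : ℝ) + 1 ≠ 0 := by positivity
    field_simp

lemma totalDegree_Jop {f : MvPolynomial σ' ℝ} {D : ℕ} (hf : f.totalDegree ≤ D) :
    (Jop d f).totalDegree ≤ D + 1 := by
  conv_lhs => rw [f.as_sum]
  rw [map_sum]
  refine le_trans (totalDegree_finset_sum _ _) (Finset.sup_le fun n hn => ?_)
  rw [Jop_monomial]
  refine le_trans (totalDegree_smul_le _ _) ?_
  refine le_trans (totalDegree_monomial_le _ _) ?_
  rw [sumid, deg_add_single]
  exact Nat.add_le_add_right (deg_le_of_mem_support hf hn) 1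

lemma totalDegree_pderiv_le {f : MvPolynomial σ' ℝ} {D : ℕ} (i : σ') (hf : f.totalDegree ≤ D + 1) :
    (pderiv i f).totalDegree ≤ D := by
  conv_lhs => rw [f.as_sum]
  rw [map_sum]
  refine le_trans (totalDegree_finset_sum _ _) (Finset.sup_le fun n hn => ?_)
  rw [pderiv_monomial]
  by_cases h : n i = 0
  · rw [h]; simp
  · refine le_trans (totalDegree_monomial_le _ _) ?_
    rw [sumid, deg_sub_single n i (by omega)]
    have h3 := deg_le_of_mem_support hf hn
    omega

lemma pderiv_eq_zero_of_totalDegree_eq_zero {f : MvPolynomial σ' ℝ} (i : σ')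
    (hf : f.totalDegree = 0) : pderiv i f = 0 := by
  conv_lhs => rw [f.as_sum]
  rw [map_sum]
  refine Finset.sum_eq_zero fun n hn => ?_
  rw [pderiv_monomial]
  have h1 : n i = 0 := by
    have := deg_le_of_mem_support (le_of_eq hf) hn
    have h2 := single_le_deg n i
    omega
  rw [h1]
  simp

/-- spatial degree -/
noncomputable def sdeg (f : MvPolynomial σ' ℝ) : ℕ :=
  f.support.sup fun n => ∑ m : Fin d, n (some m)

lemma le_sdeg {f : MvPolynomial σ' ℝ} {n : σ' →₀ ℕ} (hn : n ∈ f.support) :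
    (∑ m : Fin d, n (some m)) ≤ sdeg f :=
  Finset.le_sup (f := fun n : σ' →₀ ℕ => ∑ m : Fin d, n (some m)) hn

lemma sdeg_le_iff {f : MvPolynomial σ' ℝ} {K : ℕ} :
    sdeg f ≤ K ↔ ∀ n ∈ f.support, (∑ m : Fin d, n (some m)) ≤ K := Finset.sup_le_iff

lemma sdeg_sum_le {ι : Type*} {s : Finset ι} {g : ι → MvPolynomial σ' ℝ} {K : ℕ}
    (h : ∀ i ∈ s, sdeg (g i) ≤ K) : sdeg (∑ i ∈ s, g i) ≤ K := by
  classical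
  induction s using Finset.induction_on with
  | empty => simp [sdeg]
  | insert _ _ hni ih =>
    rename_i a s'
    rw [Finset.sum_insert hni]
    refine le_trans ?_ (max_le (h a (Finset.mem_insert_self a s'))
      (ih fun i hi => h i (Finset.mem_insert_of_mem hi)))
    refine Finset.sup_le fun n hn => ?_
    rcases Finset.mem_union.mp (MvPolynomial.support_add hn) with h' | h'
    · exact le_max_of_le_left (le_sdeg h')
    · exact le_max_of_le_right (le_sdeg h')

lemma sdeg_smul_le {f : MvPolynomial σ' ℝ} (r : ℝ) : sdeg (r • f) ≤ sdeg f := by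
  refine Finset.sup_le fun n hn => le_sdeg (Finsupp.support_smul hn)

lemma sdeg_monomial_le (n : σ' →₀ ℕ) (a : ℝ) :
    sdeg (monomial n a) ≤ ∑ m : Fin d, n (some m) := by
  refine Finset.sup_le fun k hk => ?_
  rcases Finset.mem_singleton.mp (le_trans (support_monomial_subset) le_rfl hk) with rfl
  exact le_rfl

lemma sw_add_single_none (n : σ' →₀ ℕ) :
    ∑ m : Fin d, ((n + Finsupp.single (none : σ') 1 : σ' →₀ ℕ)) (some m)
      = ∑ m : Fin d, n (some m) := by
  simp [Finsupp.add_apply, Finsupp.single_apply]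

lemma sdeg_Jop {f : MvPolynomial σ' ℝ} {K : ℕ} (hf : sdeg f ≤ K) : sdeg (Jop d f) ≤ K := by
  conv_lhs => rw [f.as_sum]
  rw [map_sum]
  refine sdeg_sum_le fun n hn => ?_
  rw [Jop_monomial]
  refine le_trans (sdeg_smul_le _) (le_trans (sdeg_monomial_le _ _) ?_)
  rw [sw_add_single_none]
  exact le_trans (le_sdeg hn) hf

lemma sdeg_pderiv_some {f : MvPolynomial σ' ℝ} {K : ℕ} (m : Fin d) (hf : sdeg f ≤ K + 1) :
    sdeg (pderiv (some m) f) ≤ K := by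
  conv_lhs => rw [f.as_sum]
  rw [map_sum]
  refine sdeg_sum_le fun n hn => ?_
  rw [pderiv_monomial]
  by_cases h : n (some m) = 0
  · rw [h]; simp [sdeg]
  · refine le_trans (sdeg_monomial_le _ _) ?_
    have h1 : ∀ m' : Fin d, ((n - Finsupp.single (some m) 1 : σ' →₀ ℕ)) (some m')
        = n (some m') - (Finsupp.single ((some m) : σ') 1) (some m') := fun m' =>
      Finsupp.tsub_apply _ _ _
    have h2 : ∑ m' : Fin d, (Finsupp.single ((some m) : σ') 1) (some m') = 1 := by
      simp [Finsupp.single_apply]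
    have h3 : ∑ m' : Fin d, ((n - Finsupp.single (some m) 1 : σ' →₀ ℕ)) (some m')
        = (∑ m' : Fin d, n (some m')) - 1 := by
      simp only [h1]
      rw [Finset.sum_tsub_distrib, h2]
      intro m' _
      rcases eq_or_ne m' m with rfl | hm
      · simp [Finsupp.single_apply]; omega
      · simp [Finsupp.single_apply, Ne.symm hm]
    rw [h3]
    have h4 : ∑ m' : Fin d, n (some m') ≤ K + 1 := le_trans (le_sdeg hn) hf
    have h5 : n (some m) ≤ ∑ m' : Fin d, n (some m') :=
      Finset.single_le_sum (f := fun m' : Fin d => n (some m')) (fun j _ => Nat.zero_le _)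
        (Finset.mem_univ m)
    omega

lemma pderiv_some_eq_zero_of_sdeg_zero {f : MvPolynomial σ' ℝ} (m : Fin d)
    (hf : sdeg f = 0) : pderiv (some m) f = 0 := by
  conv_lhs => rw [f.as_sum]
  rw [map_sum]
  refine Finset.sum_eq_zero fun n hn => ?_
  rw [pderiv_monomial]
  have h1 : n (some m) = 0 := by
    have h4 : ∑ m' : Fin d, n (some m') ≤ 0 := le_trans (le_sdeg hn) (le_of_eq hf)
    have h5 : n (some m) ≤ ∑ m' : Fin d, n (some m') :=
      Finset.single_le_sum (f := fun m' : Fin d => n (some m')) (fun j _ => Nat.zero_le _)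
        (Finset.mem_univ m)
    omega
  rw [h1]
  simp


lemma waveOp_apply (c : ℝ) (U : MvPolynomial σ' ℝ) :
    waveOp (d := d) c U = (c ^ 2)⁻¹ • (pderiv none (pderiv none U))
      - ∑ m : Fin d, pderiv (some m) (pderiv (some m) U) := by
  rw [waveOp]
  simp only [LinearMap.sub_apply, LinearMap.smul_apply, LinearMap.coe_sum, Finset.sum_apply,
    LinearMap.comp_apply, Derivation.coeFn_coe]

lemma exists_sol {c : ℝ} (hc : c ≠ 0) :
    ∀ (N : ℕ) (g : MvPolynomial σ' ℝ) (q : ℕ), sdeg g ≤ N → g.totalDegree ≤ q →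
      ∃ U, U.totalDegree ≤ q + 2 ∧ waveOp (d := d) c U = g := by
  intro N
  induction N using Nat.strong_induction_on with
  | _ N IH =>
    intro g q hsg htg
    set W : MvPolynomial σ' ℝ := (c ^ 2) • Jop d (Jop d g) with hW
    have hWt : W.totalDegree ≤ q + 2 :=
      le_trans (totalDegree_smul_le _ _) (totalDegree_Jop (totalDegree_Jop htg))
    have hWs : sdeg W ≤ N := le_trans (sdeg_smul_le _) (sdeg_Jop (sdeg_Jop hsg))
    have hpp : pderiv (none : σ') (pderiv none W) = (c ^ 2) • g := by
      rw [hW, Derivation.map_smul, Derivation.map_smul, pderiv_none_Jop, pderiv_none_Jop]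
    have hWv : waveOp (d := d) c W
        = g - ∑ m : Fin d, pderiv (some m) (pderiv (some m) W) := by
      rw [waveOp_apply, hpp, smul_smul, inv_mul_cancel₀ (pow_ne_zero 2 hc), one_smul]
    by_cases hN : N ≤ 1
    · refine ⟨W, hWt, ?_⟩
      rw [hWv]
      have hz : ∀ m : Fin d, pderiv (some m) (pderiv (some m) W) = 0 := fun m => by
        have h1 : sdeg (pderiv (some m) W) ≤ 0 := sdeg_pderiv_some m (le_trans hWs (by omega))
        exact pderiv_some_eq_zero_of_sdeg_zero m (Nat.le_zero.mp h1)
      rw [Finset.sum_eq_zero fun m _ => hz m, sub_zero]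
    · set g' : MvPolynomial σ' ℝ := ∑ m : Fin d, pderiv (some m) (pderiv (some m) W) with hg'
      have hg's : sdeg g' ≤ N - 2 := sdeg_sum_le fun m _ => by
        refine sdeg_pderiv_some m ?_
        have := sdeg_pderiv_some m (show sdeg W ≤ (N - 1) + 1 by omega)
        omega
      have hg't : g'.totalDegree ≤ q := by
        refine le_trans (totalDegree_finset_sum _ _) (Finset.sup_le fun m _ => ?_)
        exact totalDegree_pderiv_le _ (totalDegree_pderiv_le _ (by simpa using hWt))
      obtain ⟨U', hU't, hU'v⟩ := IH (N - 2) (by omega) g' q hg's hg't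
      refine ⟨W + U', le_trans (totalDegree_add _ _) (max_le hWt hU't), ?_⟩
      rw [map_add, hWv, hU'v]
      exact sub_add_cancel _ _

end Aux
theorem stmt5 {d p : ℕ} (c : ℝ) (hc : 0 < c) :
    Module.finrank ℝ
        ↥(MvPolynomial.restrictTotalDegree (Option (Fin d)) ℝ p ⊓
            LinearMap.ker (waveOp (d := d) c)) =
      (p + d).choose d + (if p = 0 then 0 else (p - 1 + d).choose d) := by
  have hcc : c ≠ 0 := ne_of_gt hc
  have hcard : Fintype.card (Option (Fin d)) = d + 1 := by simp
  have hfr : ∀ N : ℕ, Module.finrank ℝ (restrictTotalDegree (Option (Fin d)) ℝ N)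
      = (N + (d + 1)).choose (d + 1) := fun N => by rw [finrank_rtd, hcard]
  rcases p with _ | _ | q
  · -- p = 0
    have hker : restrictTotalDegree (Option (Fin d)) ℝ 0 ≤ LinearMap.ker (waveOp (d := d) c) := by
      intro U hU
      rw [mem_restrictTotalDegree] at hU
      rw [LinearMap.mem_ker, waveOp_apply]
      have hz : ∀ i : Option (Fin d), pderiv i U = 0 := fun i =>
        pderiv_eq_zero_of_totalDegree_eq_zero i (Nat.le_zero.mp hU)
      rw [hz none, map_zero, smul_zero]
      simp [hz]
    rw [inf_eq_left.mpr hker, hfr 0]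
    simp [Nat.choose_self]
  · -- p = 1
    have hker : restrictTotalDegree (Option (Fin d)) ℝ 1 ≤ LinearMap.ker (waveOp (d := d) c) := by
      intro U hU
      rw [mem_restrictTotalDegree] at hU
      rw [LinearMap.mem_ker, waveOp_apply]
      have hz : ∀ i j : Option (Fin d), pderiv j (pderiv i U) = 0 := fun i j =>
        pderiv_eq_zero_of_totalDegree_eq_zero j
          (Nat.le_zero.mp (totalDegree_pderiv_le (D := 0) i hU))
      rw [hz none none, smul_zero]
      simp [hz]
    rw [inf_eq_left.mpr hker, hfr 1]
    have e1 : (1 + (d + 1)).choose (d + 1) = d + 2 := by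
      rw [show 1 + (d + 1) = (d + 1) + 1 from by omega, Nat.choose_succ_self_right]
    have e2 : (1 + d).choose d = d + 1 := by
      rw [show 1 + d = d + 1 from by omega, Nat.choose_succ_self_right]
    simp only [e1, e2, Nat.choose_self]
    simp
  · -- p = q + 2
    have hmaps : ∀ U ∈ restrictTotalDegree (Option (Fin d)) ℝ (q + 2),
        waveOp (d := d) c U ∈ restrictTotalDegree (Option (Fin d)) ℝ q := by
      intro U hU
      rw [mem_restrictTotalDegree] at hU ⊢
      rw [waveOp_apply, sub_eq_add_neg]
      refine le_trans (totalDegree_add _ _) (max_le ?_ ?_)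
      · exact le_trans (totalDegree_smul_le _ _)
          (totalDegree_pderiv_le _ (totalDegree_pderiv_le (D := q + 1) _ hU))
      · rw [totalDegree_neg]
        refine le_trans (totalDegree_finset_sum _ _) (Finset.sup_le fun m _ => ?_)
        exact totalDegree_pderiv_le _ (totalDegree_pderiv_le (D := q + 1) _ hU)
    set φ := (waveOp (d := d) c).restrict hmaps with hφ
    have hsurj : Function.Surjective φ := by
      rintro ⟨g, hg⟩
      rw [mem_restrictTotalDegree] at hg
      obtain ⟨U, hUt, hUv⟩ := exists_sol hcc (sdeg g) g q le_rfl hg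
      exact ⟨⟨U, (mem_restrictTotalDegree _ _ _).mpr hUt⟩, Subtype.ext hUv⟩
    have hrank := LinearMap.finrank_range_add_finrank_ker φ
    have hrange : Module.finrank ℝ (LinearMap.range φ)
        = Module.finrank ℝ (restrictTotalDegree (Option (Fin d)) ℝ q) := by
      rw [LinearMap.range_eq_top.mpr hsurj, finrank_top]
    have hkereq : LinearMap.ker φ
        = Submodule.comap (restrictTotalDegree (Option (Fin d)) ℝ (q + 2)).subtype
            (restrictTotalDegree (Option (Fin d)) ℝ (q + 2) ⊓ LinearMap.ker (waveOp (d := d) c)) := by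
      rw [hφ, LinearMap.ker_restrict, Submodule.comap_inf,
        Submodule.comap_subtype_self, top_inf_eq]
      try rw [LinearMap.ker_domRestrict]
    have hkerfr : Module.finrank ℝ (LinearMap.ker φ)
        = Module.finrank ℝ ↥(restrictTotalDegree (Option (Fin d)) ℝ (q + 2) ⊓
            LinearMap.ker (waveOp (d := d) c)) := by
      rw [hkereq]
      exact (Submodule.comapSubtypeEquivOfLe inf_le_left).finrank_eq
    rw [hrange, hkerfr, hfr q, hfr (q + 2)] at hrank
    have P1 : (q + d + 3).choose (d + 1) = (q + d + 2).choose d + (q + d + 2).choose (d + 1) := by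
      rw [show q + d + 3 = (q + d + 2) + 1 from rfl]
      exact Nat.choose_succ_succ _ _
    have P2 : (q + d + 2).choose (d + 1) = (q + d + 1).choose d + (q + d + 1).choose (d + 1) := by
      rw [show q + d + 2 = (q + d + 1) + 1 from rfl]
      exact Nat.choose_succ_succ _ _
    have e1 : q + 2 + (d + 1) = q + d + 3 := by omega
    have e2 : q + (d + 1) = q + d + 1 := by omega
    rw [e1, e2] at hrank
    have e3 : q + 2 + d = q + d + 2 := by omega
    have e4 : q + 2 - 1 + d = q + d + 1 := by omega
    rw [show (q + 1 + 1 : ℕ) = q + 2 from rfl,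
      if_neg (show ¬(q + 2 = 0) from by omega), e3, e4]
    omega
end

section
/- Every pair of polynomial Cauchy data (b, b̃) with b ∈ ℙ^p(ℝ^d) and b̃ ∈ ℙ^{p−1}(ℝ^d) extends uniquely to a polynomial U ∈ ℙ^p(ℝ^{1+d}) satisfying −ΔU + c^{-2}∂²U/∂t² = 0 with U(x,0) = b(x) and ∂_t U(x,0) = b̃(x); the extension is given by the time-Taylor recursion ∂_t^{k} U(·,0) determined from b, b̃ via a_{k,α} = (c²/(k(k−1))) Σ_m (α_m+2)(α_m+1) a_{k−2,α+2e_m}. -/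
open MvPolynomial

/-- The exponent of the monomial `t^k x^α`. -/
noncomputable def expo {d : ℕ} (k : ℕ) (α : Fin d →₀ ℕ) : Option (Fin d) →₀ ℕ :=
  Finsupp.single none k + α.mapDomain some

/-- Evaluation of a space-time polynomial at time `t = 0`. -/
noncomputable def evalTimeZero {d : ℕ} :
    MvPolynomial (Option (Fin d)) ℝ →ₐ[ℝ] MvPolynomial (Fin d) ℝ :=
  aeval fun i : Option (Fin d) => i.elim 0 X

namespace StmtAux

variable {d : ℕ}

theorem coeff_pderiv {σ : Type*} (i : σ) (W : MvPolynomial σ ℝ) (m : σ →₀ ℕ) :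
    (pderiv i W).coeff m = ((m i : ℝ) + 1) * W.coeff (m + Finsupp.single i 1) := by
  classical
  induction W using MvPolynomial.induction_on' with
  | monomial s a =>
    rw [pderiv_monomial, coeff_monomial, coeff_monomial]
    by_cases h : s = m + Finsupp.single i 1
    · subst h
      rw [if_pos rfl, if_pos (by rw [add_tsub_cancel_right])]
      rw [Finsupp.add_apply, Finsupp.single_eq_same]
      push_cast
      ring
    · rw [if_neg h, mul_zero]
      by_cases h2 : s - Finsupp.single i 1 = m
      · rw [if_pos h2]
        by_cases hsi : s i = 0
        · simp [hsi]
        · exfalso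
          apply h
          rw [← h2, tsub_add_cancel_of_le]
          exact Finsupp.single_le_iff.2 (Nat.one_le_iff_ne_zero.2 hsi)
      · rw [if_neg h2]
  | add q1 q2 ih1 ih2 =>
    simp only [map_add, coeff_add, ih1, ih2]
    ring

theorem expo_none (k : ℕ) (α : Fin d →₀ ℕ) : expo k α none = k := by
  rw [expo, Finsupp.add_apply, Finsupp.single_eq_same,
    Finsupp.mapDomain_notin_range _ _ (by simp), add_zero]

theorem expo_some (k : ℕ) (α : Fin d →₀ ℕ) (m : Fin d) : expo k α (some m) = α m := by
  rw [expo, Finsupp.add_apply, Finsupp.single_apply, if_neg (by simp),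
    Finsupp.mapDomain_apply (Option.some_injective _), zero_add]

theorem expo_add_none (k : ℕ) (α : Fin d →₀ ℕ) :
    expo k α + Finsupp.single none 1 = expo (k + 1) α := by
  simp only [expo, Finsupp.single_add]
  abel

theorem expo_add_some (k : ℕ) (α : Fin d →₀ ℕ) (m : Fin d) (j : ℕ) :
    expo k α + Finsupp.single (some m) j = expo k (α + Finsupp.single m j) := by
  simp only [expo, Finsupp.mapDomain_add, Finsupp.mapDomain_single]
  abel

theorem eq_expo (u : Option (Fin d) →₀ ℕ) : u = expo (u none) u.some := by
  ext i
  cases i with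
  | none => rw [expo_none]
  | some m => rw [expo_some, Finsupp.some_apply]

theorem expo_eq_iff {k k' : ℕ} {α α' : Fin d →₀ ℕ} :
    expo k α = expo k' α' ↔ k = k' ∧ α = α' := by
  constructor
  · intro h
    constructor
    · have := DFunLike.congr_fun h none
      rwa [expo_none, expo_none] at this
    · ext m
      have := DFunLike.congr_fun h (some m)
      rwa [expo_some, expo_some] at this
  · rintro ⟨rfl, rfl⟩; rfl

/-- The spatial Laplacian. -/
noncomputable def lap : MvPolynomial (Fin d) ℝ →ₗ[ℝ] MvPolynomial (Fin d) ℝ :=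
  ∑ m : Fin d, (pderiv m).toLinearMap ∘ₗ (pderiv m).toLinearMap

theorem lap_apply (q : MvPolynomial (Fin d) ℝ) :
    lap q = ∑ m : Fin d, pderiv m (pderiv m q) := by
  simp [lap]

theorem coeff_lap (q : MvPolynomial (Fin d) ℝ) (α : Fin d →₀ ℕ) :
    (lap q).coeff α =
      ∑ m : Fin d, ((α m : ℝ) + 2) * ((α m : ℝ) + 1) * q.coeff (α + Finsupp.single m 2) := by
  rw [lap_apply, MvPolynomial.coeff_sum]
  refine Finset.sum_congr rfl fun m _ => ?_
  rw [coeff_pderiv, coeff_pderiv,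
    show α + Finsupp.single m 1 + Finsupp.single m 1 = α + Finsupp.single m 2 from by
      rw [add_assoc, ← Finsupp.single_add],
    Finsupp.add_apply, Finsupp.single_eq_same]
  push_cast
  ring

theorem totalDegree_pderiv_le {σ : Type*} (i : σ) (q : MvPolynomial σ ℝ) :
    (pderiv i q).totalDegree ≤ q.totalDegree - 1 := by
  classical
  rw [MvPolynomial.totalDegree]
  apply Finset.sup_le
  intro s hs
  rw [MvPolynomial.mem_support_iff, coeff_pderiv] at hs
  have h2 : q.coeff (s + Finsupp.single i 1) ≠ 0 := right_ne_zero_of_mul hs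
  have h3 := MvPolynomial.le_totalDegree (MvPolynomial.mem_support_iff.2 h2)
  rw [Finsupp.sum_add_index' (fun _ => rfl) (fun _ _ _ => rfl),
    Finsupp.sum_single_index rfl] at h3
  omega

theorem totalDegree_lap_le (q : MvPolynomial (Fin d) ℝ) :
    (lap q).totalDegree ≤ q.totalDegree - 2 := by
  rw [lap_apply]
  refine (MvPolynomial.totalDegree_finset_sum _ _).trans (Finset.sup_le fun m _ => ?_)
  have h1 := totalDegree_pderiv_le m (pderiv m q)
  have h2 := totalDegree_pderiv_le m q
  omega

theorem lap_eq_zero (q : MvPolynomial (Fin d) ℝ) (h : q.totalDegree ≤ 1) : lap q = 0 := by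
  apply MvPolynomial.ext
  intro α
  rw [MvPolynomial.coeff_zero, coeff_lap]
  refine Finset.sum_eq_zero fun m _ => ?_
  apply mul_eq_zero_of_right
  apply MvPolynomial.coeff_eq_zero_of_totalDegree_lt
  have hsum : ((α + Finsupp.single m 2).sum fun _ e => e) = (α.sum fun _ e => e) + 2 := by
    rw [Finsupp.sum_add_index' (fun _ => rfl) (fun _ _ _ => rfl),
      Finsupp.sum_single_index rfl]
  show q.totalDegree < (α + Finsupp.single m 2).sum fun _ e => e
  omega

variable (c : ℝ) (b bt : MvPolynomial (Fin d) ℝ)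

/-- Taylor coefficients in time of the solution. -/
noncomputable def BB : ℕ → MvPolynomial (Fin d) ℝ
  | 0 => b
  | 1 => bt
  | (k + 2) => (c ^ 2 / (((k : ℝ) + 2) * ((k : ℝ) + 1))) • lap (BB k)

theorem BB_succ_succ (k : ℕ) :
    BB c b bt (k + 2) = (c ^ 2 / (((k : ℝ) + 2) * ((k : ℝ) + 1))) • lap (BB c b bt k) := rfl

theorem BB_deg {p : ℕ} (hb : b.totalDegree ≤ p) (hbt : bt.totalDegree ≤ p - 1) :
    ∀ k, (BB c b bt k).totalDegree ≤ p - k := by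
  intro k
  induction k using Nat.strong_induction_on with
  | _ k ih =>
    rcases k with _ | _ | j
    · simpa [BB] using hb
    · simpa [BB] using hbt
    · rw [BB_succ_succ]
      refine (MvPolynomial.totalDegree_smul_le _ _).trans ?_
      have h1 := totalDegree_lap_le (BB c b bt j)
      have h2 := ih j (by omega)
      omega

theorem BB_zero {p : ℕ} (hp : 1 ≤ p) (hb : b.totalDegree ≤ p) (hbt : bt.totalDegree ≤ p - 1) :
    ∀ k, p < k → BB c b bt k = 0 := by
  intro k
  induction k using Nat.strong_induction_on with
  | _ k ih =>
    rcases k with _ | _ | j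
    · omega
    · omega
    · intro hk
      rw [BB_succ_succ]
      rcases le_or_gt j p with h | h
      · rw [lap_eq_zero _ ((BB_deg c b bt hb hbt j).trans (by omega)), smul_zero]
      · rw [ih j (by omega) h, map_zero, smul_zero]

theorem coeff_term (k j : ℕ) (α : Fin d →₀ ℕ) (q : MvPolynomial (Fin d) ℝ) :
    MvPolynomial.coeff (expo k α) (X (none : Option (Fin d)) ^ j * rename some q)
      = if j = k then q.coeff α else 0 := by
  induction q using MvPolynomial.induction_on' with
  | monomial u a =>
    rw [rename_monomial, X_pow_eq_monomial, monomial_mul, one_mul,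
      show Finsupp.single (none : Option (Fin d)) j + Finsupp.mapDomain some u = expo j u from rfl,
      coeff_monomial]
    by_cases hjk : j = k
    · subst hjk
      rw [if_pos rfl, coeff_monomial]
      by_cases hu : u = α
      · subst hu; rw [if_pos rfl, if_pos rfl]
      · rw [if_neg (fun h => hu (expo_eq_iff.1 h).2), if_neg hu]
    · rw [if_neg hjk, if_neg (fun h => hjk (expo_eq_iff.1 h).1)]
  | add q1 q2 ih1 ih2 =>
    rw [map_add, mul_add, coeff_add, ih1, ih2]
    split <;> simp

theorem evalTimeZero_monomial (k : ℕ) (β : Fin d →₀ ℕ) (r : ℝ) :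
    evalTimeZero (monomial (expo k β) r) = if k = 0 then monomial β r else 0 := by
  have h1 : (monomial (expo k β) r : MvPolynomial (Option (Fin d)) ℝ)
      = (C r * X none ^ k) * rename some (monomial β (1 : ℝ)) := by
    rw [rename_monomial, X_pow_eq_monomial, C_mul_monomial, monomial_mul, mul_one, mul_one]
    rfl
  have h2 : evalTimeZero (rename (some : Fin d → Option (Fin d)) (monomial β (1 : ℝ)))
      = monomial β (1 : ℝ) := by
    rw [evalTimeZero, aeval_rename]
    exact aeval_X_left_apply _
  have h3 : evalTimeZero (X (none : Option (Fin d))) = 0 := by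
    rw [evalTimeZero, aeval_X]
    rfl
  rw [h1, map_mul, map_mul, map_pow, h2, h3]
  have h4 : evalTimeZero (C r : MvPolynomial (Option (Fin d)) ℝ) = C r := by
    rw [evalTimeZero]
    simp
  rw [h4]
  rcases Nat.eq_zero_or_pos k with hk | hk
  · subst hk
    rw [if_pos rfl, pow_zero, mul_one, C_mul_monomial, mul_one]
  · rw [if_neg (by omega), zero_pow (by omega), mul_zero, zero_mul]

theorem coeff_evalTimeZero (W : MvPolynomial (Option (Fin d)) ℝ) (α : Fin d →₀ ℕ) :
    (evalTimeZero W).coeff α = W.coeff (expo 0 α) := by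
  induction W using MvPolynomial.induction_on' with
  | monomial u r =>
    obtain ⟨k, β, rfl⟩ : ∃ k β, u = expo k β := ⟨u none, u.some, eq_expo u⟩
    rw [evalTimeZero_monomial, coeff_monomial]
    by_cases hk : k = 0
    · subst hk
      rw [if_pos rfl, coeff_monomial]
      by_cases hb : β = α
      · subst hb; rw [if_pos rfl, if_pos rfl]
      · rw [if_neg hb, if_neg (fun h => hb (expo_eq_iff.1 h).2)]
    · rw [if_neg hk, if_neg (fun h => hk (expo_eq_iff.1 h).1), MvPolynomial.coeff_zero]
  | add q1 q2 ih1 ih2 =>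
    rw [map_add, coeff_add, coeff_add, ih1, ih2]

end StmtAux

theorem stmt6 {d p : ℕ} (hp : 1 ≤ p) (c : ℝ) (hc : 0 < c)
    (b : MvPolynomial (Fin d) ℝ) (hb : b.totalDegree ≤ p)
    (bt : MvPolynomial (Fin d) ℝ) (hbt : bt.totalDegree ≤ p - 1) :
    ∃! U : MvPolynomial (Option (Fin d)) ℝ,
      U.totalDegree ≤ p ∧ waveOp c U = 0 ∧
      evalTimeZero U = b ∧
      evalTimeZero (pderiv (none : Option (Fin d)) U) = bt ∧
      (∀ (k : ℕ) (α : Fin d →₀ ℕ), 2 ≤ k →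
        U.coeff (expo k α) =
          c ^ 2 / ((k : ℝ) * ((k : ℝ) - 1)) *
            ∑ m : Fin d, ((α m : ℝ) + 2) * ((α m : ℝ) + 1) *
              U.coeff (expo (k - 2) (α + Finsupp.single m 2))) := by
  classical
  have hc2 : c ^ 2 ≠ 0 := pow_ne_zero _ hc.ne'
  set A : ℕ → MvPolynomial (Fin d) ℝ := StmtAux.BB c b bt with hAdef
  have hAdeg : ∀ k, (A k).totalDegree ≤ p - k := StmtAux.BB_deg c b bt hb hbt
  have hAzero : ∀ k, p < k → A k = 0 := StmtAux.BB_zero c b bt hp hb hbt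
  set U : MvPolynomial (Option (Fin d)) ℝ :=
    ∑ k ∈ Finset.range (p + 1), X (none : Option (Fin d)) ^ k * rename some (A k) with hUdef
  have hcoeffU : ∀ (k : ℕ) (α : Fin d →₀ ℕ), U.coeff (expo k α) = (A k).coeff α := by
    intro k α
    rw [hUdef, MvPolynomial.coeff_sum]
    simp only [StmtAux.coeff_term]
    rw [Finset.sum_ite_eq' (Finset.range (p + 1)) k (fun j => (A j).coeff α)]
    by_cases hk : k ≤ p
    · rw [if_pos (Finset.mem_range.2 (by omega))]
    · rw [if_neg (by simp; omega), hAzero k (by omega), MvPolynomial.coeff_zero]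
  have hrec : ∀ (k : ℕ) (α : Fin d →₀ ℕ), 2 ≤ k →
      U.coeff (expo k α) =
        c ^ 2 / ((k : ℝ) * ((k : ℝ) - 1)) *
          ∑ m : Fin d, ((α m : ℝ) + 2) * ((α m : ℝ) + 1) *
            U.coeff (expo (k - 2) (α + Finsupp.single m 2)) := by
    intro k α hk
    obtain ⟨j, rfl⟩ : ∃ j, k = j + 2 := ⟨k - 2, by omega⟩
    have hsub : (j + 2) - 2 = j := by omega
    have hstep : A (j + 2) = (c ^ 2 / (((j : ℝ) + 2) * ((j : ℝ) + 1))) • StmtAux.lap (A j) :=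
      StmtAux.BB_succ_succ c b bt j
    rw [hcoeffU, hstep, MvPolynomial.coeff_smul, StmtAux.coeff_lap, smul_eq_mul]
    simp only [hsub, hcoeffU]
    push_cast
    congr 1
    ring
  have hwave : waveOp c U = 0 := by
    apply MvPolynomial.ext
    intro u
    rw [MvPolynomial.coeff_zero]
    obtain ⟨k, α, rfl⟩ : ∃ k α, u = expo k α := ⟨u none, u.some, StmtAux.eq_expo u⟩
    have hwapp : waveOp c U = (c ^ 2)⁻¹ • (pderiv none (pderiv none U))
        - ∑ m : Fin d, pderiv (some m) (pderiv (some m) U) := by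
      simp [waveOp, LinearMap.sub_apply, LinearMap.smul_apply, LinearMap.coe_sum,
        Finset.sum_apply, LinearMap.comp_apply]
    rw [hwapp, MvPolynomial.coeff_sub, MvPolynomial.coeff_smul, smul_eq_mul,
      StmtAux.coeff_pderiv, StmtAux.expo_none, StmtAux.expo_add_none,
      StmtAux.coeff_pderiv, StmtAux.expo_none, StmtAux.expo_add_none,
      hcoeffU, MvPolynomial.coeff_sum]
    have hsp : ∀ m : Fin d,
        MvPolynomial.coeff (expo k α) (pderiv (some m) (pderiv (some m) U))
          = ((α m : ℝ) + 2) * ((α m : ℝ) + 1) * (A k).coeff (α + Finsupp.single m 2) := by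
      intro m
      rw [StmtAux.coeff_pderiv, StmtAux.expo_some, StmtAux.expo_add_some,
        StmtAux.coeff_pderiv, StmtAux.expo_some, StmtAux.expo_add_some,
        show α + Finsupp.single m 1 + Finsupp.single m 1 = α + Finsupp.single m 2 from by
          rw [add_assoc, ← Finsupp.single_add],
        hcoeffU, Finsupp.add_apply, Finsupp.single_eq_same]
      push_cast
      ring
    rw [Finset.sum_congr rfl fun m _ => hsp m]
    have hA2 : (A (k + 2)).coeff α
        = c ^ 2 / (((k : ℝ) + 2) * ((k : ℝ) + 1)) *
            ∑ m : Fin d, ((α m : ℝ) + 2) * ((α m : ℝ) + 1) *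
              (A k).coeff (α + Finsupp.single m 2) := by
      rw [hAdef, StmtAux.BB_succ_succ, MvPolynomial.coeff_smul, StmtAux.coeff_lap, smul_eq_mul]
    rw [hA2]
    have h1 : ((k : ℝ) + 1) ≠ 0 := by positivity
    have h2 : ((k : ℝ) + 2) ≠ 0 := by positivity
    push_cast
    field_simp
    ring
  have hev0 : evalTimeZero U = b := by
    apply MvPolynomial.ext
    intro α
    rw [StmtAux.coeff_evalTimeZero, hcoeffU]
    rfl
  have hev1 : evalTimeZero (pderiv (none : Option (Fin d)) U) = bt := by
    apply MvPolynomial.ext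
    intro α
    rw [StmtAux.coeff_evalTimeZero, StmtAux.coeff_pderiv, StmtAux.expo_none,
      StmtAux.expo_add_none, hcoeffU]
    show ((0 : ℕ) + 1 : ℝ) * bt.coeff α = bt.coeff α
    push_cast
    ring
  have hdeg : U.totalDegree ≤ p := by
    rw [hUdef]
    refine (MvPolynomial.totalDegree_finset_sum _ _).trans (Finset.sup_le fun k hk => ?_)
    refine (MvPolynomial.totalDegree_mul _ _).trans ?_
    have h1 : (X (none : Option (Fin d)) ^ k : MvPolynomial _ ℝ).totalDegree ≤ k := by
      simp [MvPolynomial.totalDegree_X_pow]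
    have h2 := (MvPolynomial.totalDegree_rename_le some (A k)).trans (hAdeg k)
    have := Finset.mem_range.1 hk
    omega
  refine ⟨U, ⟨hdeg, hwave, hev0, hev1, hrec⟩, ?_⟩
  rintro V ⟨-, -, hV0, hV1, hV5⟩
  have key : ∀ (k : ℕ) (α : Fin d →₀ ℕ), V.coeff (expo k α) = U.coeff (expo k α) := by
    intro k
    induction k using Nat.strong_induction_on with
    | _ k ih =>
      rcases k with _ | _ | j
      · intro α
        have h1 := congrArg (fun q => MvPolynomial.coeff α q) hV0
        rw [StmtAux.coeff_evalTimeZero] at h1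
        rw [h1, hcoeffU]
        rfl
      · intro α
        have h1 := congrArg (fun q => MvPolynomial.coeff α q) hV1
        rw [StmtAux.coeff_evalTimeZero, StmtAux.coeff_pderiv, StmtAux.expo_none,
          StmtAux.expo_add_none] at h1
        norm_num at h1 ⊢
        rw [h1, hcoeffU]
        rfl
      · intro α
        have hsub : (j + 2) - 2 = j := by omega
        rw [hV5 (j + 2) α (by omega), hrec (j + 2) α (by omega)]
        congr 1
        refine Finset.sum_congr rfl fun m _ => ?_
        rw [hsub, ih j (by omega)]
  apply MvPolynomial.ext
  intro u
  rw [show u = expo (u none) u.some from StmtAux.eq_expo u]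
  exact key _ _
end
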